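/- Let X be a compactum. The map n₁X : D₁X → A·X given by n₁X(f)(φ) = max{f(x)·φ(x) : x ∈ X} and the map s₁X : A·X → D₁X given by s₁X(μ)(x) = inf{μ(φ) : φ ∈ C(X,[0,1]) with φ(x) = 1} are well defined (n₁X(f) is a ·-measure for every f ∈ D₁X, and s₁X(μ) ∈ D₁X for every ·-measure μ) and mutually inverse: n₁X ∘ s₁X = id on A·X and s₁X ∘ n₁X = id on D₁X. -/

import Mathlib

/-- `C(X,[0,1])`: continuous real functions with values in `[0,1]`. -/
abbrev CI (X : Type*) [TopologicalSpace X] := {φ : C(X, ℝ) // ∀ x, 0 ≤ φ x ∧ φ x ≤ 1}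

/-- The constant function `1` as an element of `C(X,[0,1])`. -/
def CI.one (X : Type*) [TopologicalSpace X] : CI X :=
  ⟨1, fun x => by simp⟩

/-- Multiplication of `φ ∈ C(X,[0,1])` by a constant `l ∈ [0,1]`. -/
def CI.smul {X : Type*} [TopologicalSpace X] (l : ℝ) (hl : 0 ≤ l ∧ l ≤ 1) (φ : CI X) :
    CI X :=
  ⟨ContinuousMap.const X l * φ.1, fun x => by
    have h := φ.2 x
    simp only [ContinuousMap.mul_apply, ContinuousMap.const_apply]
    constructor <;> nlinarith [h.1, h.2, hl.1, hl.2]⟩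

/-- The pointwise maximum of `φ, ψ ∈ C(X,[0,1])`. -/
def CI.max {X : Type*} [TopologicalSpace X] (φ ψ : CI X) : CI X :=
  ⟨φ.1 ⊔ ψ.1, fun x => by
    have h1 := φ.2 x
    have h2 := ψ.2 x
    simp only [ContinuousMap.sup_apply]
    exact ⟨le_sup_of_le_left h1.1, sup_le h1.2 h2.2⟩⟩

/-- A `·`-measure on `X`: a functional on `C(X,[0,1])` with values in `[0,1]`,
normalized, homogeneous with respect to multiplication by constants in `[0,1]`,
and preserving finite maxima. -/
def IsDotMeasure {X : Type*} [TopologicalSpace X] (μ : CI X → ℝ) : Prop :=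
  (∀ φ, 0 ≤ μ φ ∧ μ φ ≤ 1) ∧
  μ (CI.one X) = 1 ∧
  (∀ (l : ℝ) (hl : 0 ≤ l ∧ l ≤ 1) (φ : CI X), μ (CI.smul l hl φ) = l * μ φ) ∧
  (∀ ψ φ : CI X, μ (CI.max ψ φ) = Max.max (μ ψ) (μ φ))

/-- Membership in `D₁X`: an upper semicontinuous function `X → [0,1]`
attaining the maximal value `1`. -/
def MemD1 {X : Type*} [TopologicalSpace X] (f : X → ℝ) : Prop :=
  UpperSemicontinuous f ∧ (∀ x, 0 ≤ f x ∧ f x ≤ 1) ∧ ∃ x, f x = 1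

/-- `s₁X(μ)(x) = inf{μ(φ) : φ ∈ C(X,[0,1]), φ(x) = 1}`. -/
noncomputable def s1Fun {X : Type*} [TopologicalSpace X] (μ : CI X → ℝ) (x : X) : ℝ :=
  ⨅ φ : {φ : CI X // φ.1 x = 1}, μ φ.1
section Helpers
variable {X : Type*} [TopologicalSpace X]

noncomputable instance CI.instSemilatticeSup : SemilatticeSup (CI X) :=
  Subtype.semilatticeSup fun φ ψ hφ hψ => fun x => by
    rw [ContinuousMap.sup_apply]
    exact ⟨le_max_of_le_left (hφ x).1, max_le (hφ x).2 (hψ x).2⟩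

lemma CI.sup_def (φ ψ : CI X) : φ ⊔ ψ = CI.max φ ψ := rfl

lemma CI.sup_apply' (φ ψ : CI X) (x : X) :
    (φ ⊔ ψ).1 x = Max.max (φ.1 x) (ψ.1 x) := ContinuousMap.sup_apply _ _ _

lemma CI.one_apply (x : X) : (CI.one X).1 x = 1 := rfl

lemma IsDotMeasure.sup {μ : CI X → ℝ} (hμ : IsDotMeasure μ) (φ ψ : CI X) :
    μ (φ ⊔ ψ) = Max.max (μ φ) (μ ψ) := hμ.2.2.2 φ ψ

lemma IsDotMeasure.mono {μ : CI X → ℝ} (hμ : IsDotMeasure μ) {φ ψ : CI X}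
    (h : ∀ x, φ.1 x ≤ ψ.1 x) : μ φ ≤ μ ψ := by
  have he : φ ⊔ ψ = ψ := Subtype.ext (by ext x; exact sup_eq_right.2 (h x))
  have := hμ.sup φ ψ
  rw [he] at this
  rw [this]
  exact le_max_left _ _

end Helpers

section Trunc
variable {X : Type*} [TopologicalSpace X]

/-- `min(ψ/t, 1)` for `0 < t ≤ 1`. -/
noncomputable def CI.trunc (t : ℝ) (ht : 0 < t ∧ t ≤ 1) (ψ : CI X) : CI X :=
  ⟨(ContinuousMap.const X t⁻¹ * ψ.1) ⊓ 1, fun x => by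
    have h := ψ.2 x
    simp only [ContinuousMap.inf_apply, ContinuousMap.mul_apply, ContinuousMap.const_apply,
      ContinuousMap.one_apply]
    constructor
    · exact le_min (mul_nonneg (inv_nonneg.2 ht.1.le) h.1) zero_le_one
    · exact min_le_right _ _⟩

lemma CI.trunc_apply (t : ℝ) (ht : 0 < t ∧ t ≤ 1) (ψ : CI X) (x : X) :
    (CI.trunc t ht ψ).1 x = Min.min (t⁻¹ * ψ.1 x) 1 := by
  simp [CI.trunc, ContinuousMap.inf_apply]

lemma CI.trunc_eq_one (t : ℝ) (ht : 0 < t ∧ t ≤ 1) (ψ : CI X) {x : X}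
    (hx : t ≤ ψ.1 x) : (CI.trunc t ht ψ).1 x = 1 := by
  rw [CI.trunc_apply]
  have h2 := mul_le_mul_of_nonneg_left hx (inv_nonneg.2 ht.1.le)
  rw [inv_mul_cancel₀ ht.1.ne'] at h2
  exact min_eq_right h2

lemma IsDotMeasure.trunc_le {μ : CI X → ℝ} (hμ : IsDotMeasure μ) (t : ℝ)
    (ht : 0 < t ∧ t ≤ 1) (ψ : CI X) : t * μ (CI.trunc t ht ψ) ≤ μ ψ := by
  have h1 : μ (CI.smul t ⟨ht.1.le, ht.2⟩ (CI.trunc t ht ψ)) = t * μ (CI.trunc t ht ψ) :=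
    hμ.2.2.1 t ⟨ht.1.le, ht.2⟩ _
  rw [← h1]
  refine hμ.mono fun x => ?_
  have h := (ψ.2 x).1
  simp only [CI.smul, ContinuousMap.mul_apply, ContinuousMap.const_apply, CI.trunc_apply]
  rw [mul_min_of_nonneg _ _ ht.1.le, mul_inv_cancel_left₀ ht.1.ne', mul_one]
  exact min_le_left _ _

end Trunc

section S1
variable {X : Type*} [TopologicalSpace X]

instance s1ne (x : X) : Nonempty {φ : CI X // φ.1 x = 1} := ⟨⟨CI.one X, rfl⟩⟩

lemma s1_bddBelow {μ : CI X → ℝ} (hμ : IsDotMeasure μ) (x : X) :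
    BddBelow (Set.range fun φ : {φ : CI X // φ.1 x = 1} => μ φ.1) :=
  ⟨0, by rintro _ ⟨φ, rfl⟩; exact (hμ.1 φ.1).1⟩

lemma s1_nonneg {μ : CI X → ℝ} (hμ : IsDotMeasure μ) (x : X) : 0 ≤ s1Fun μ x :=
  le_ciInf fun φ => (hμ.1 φ.1).1

lemma s1_le {μ : CI X → ℝ} (hμ : IsDotMeasure μ) {x : X} {φ : CI X} (hφ : φ.1 x = 1) :
    s1Fun μ x ≤ μ φ := ciInf_le (s1_bddBelow hμ x) ⟨φ, hφ⟩

lemma s1_le_one {μ : CI X → ℝ} (hμ : IsDotMeasure μ) (x : X) : s1Fun μ x ≤ 1 := by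
  have := s1_le hμ (φ := CI.one X) (x := x) rfl
  calc s1Fun μ x ≤ μ (CI.one X) := this
    _ ≤ 1 := (hμ.1 _).2

lemma s1_lt {μ : CI X → ℝ} (hμ : IsDotMeasure μ) {x : X} {a : ℝ} (h : s1Fun μ x < a) :
    ∃ ψ : CI X, ψ.1 x = 1 ∧ μ ψ < a := by
  obtain ⟨⟨ψ, hψ⟩, hlt⟩ := exists_lt_of_ciInf_lt h
  exact ⟨ψ, hψ, hlt⟩

end S1

section Part1
variable {X : Type*} [TopologicalSpace X]

lemma bddAbove_of_le_one {f : X → ℝ} (h : ∀ x, f x ≤ 1) : BddAbove (Set.range f) :=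
  ⟨1, by rintro _ ⟨x, rfl⟩; exact h x⟩

lemma usc_mul {f : X → ℝ} (hf : UpperSemicontinuous f) (hf01 : ∀ x, 0 ≤ f x ∧ f x ≤ 1)
    (φ : CI X) : UpperSemicontinuous (fun x => f x * φ.1 x) := by
  intro x a ha
  by_cases hc : φ.1 x = 0
  · -- product is f x * 0 = 0 < a, use continuity of φ and boundedness of f
    simp only [hc, mul_zero] at ha
    have hφ : ∀ᶠ y in nhds x, φ.1 y < a := by
      have : Filter.Tendsto (fun y => φ.1 y) (nhds x) (nhds (φ.1 x)) := (φ.1.continuous.tendsto x)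
      rw [hc] at this
      exact this.eventually_lt_const ha
    filter_upwards [hφ] with y hy
    calc f y * φ.1 y ≤ 1 * φ.1 y := mul_le_mul_of_nonneg_right (hf01 y).2 (φ.2 y).1
      _ = φ.1 y := one_mul _
      _ < a := hy
  · have hφx : 0 < φ.1 x := lt_of_le_of_ne (φ.2 x).1 (Ne.symm hc)
    -- pick b > f x, c > φ x with b * c ≤ a
    have hfa : f x < a / φ.1 x := by
      rw [lt_div_iff₀ hφx]; exact ha
    set b : ℝ := (f x + a / φ.1 x) / 2 with hb
    have hb1 : f x < b := by
      rw [hb]; linarith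
    have hb2 : b < a / φ.1 x := by rw [hb]; linarith
    have hbpos : 0 < b := lt_of_le_of_lt (hf01 x).1 hb1
    have hcb : φ.1 x < a / b := by
      rw [lt_div_iff₀ hbpos]
      calc φ.1 x * b < φ.1 x * (a / φ.1 x) := by
            exact mul_lt_mul_of_pos_left hb2 hφx
        _ = a := by field_simp
    have h1 : ∀ᶠ y in nhds x, f y < b := hf x b hb1
    have h2 : ∀ᶠ y in nhds x, φ.1 y < a / b := ((φ.1.continuous.tendsto x).eventually_lt_const hcb)
    filter_upwards [h1, h2] with y hy1 hy2
    calc f y * φ.1 y ≤ b * φ.1 y := mul_le_mul_of_nonneg_right hy1.le (φ.2 y).1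
      _ < b * (a / b) := mul_lt_mul_of_pos_left hy2 hbpos
      _ = a := by field_simp
      
lemma usc_exists_max [CompactSpace X] [Nonempty X] {g : X → ℝ}
    (hg : UpperSemicontinuous g) (hb : ∀ x, g x ≤ 1) : ∃ x₀, ∀ x, g x ≤ g x₀ := by
  by_contra h
  push_neg at h
  set M : ℝ := ⨆ x, g x with hM
  have hbdd : BddAbove (Set.range g) := bddAbove_of_le_one hb
  have hle : ∀ x, g x ≤ M := fun x => le_ciSup hbdd x
  have hlt : ∀ x, g x < M := by
    intro x
    rcases lt_or_eq_of_le (hle x) with h' | h'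
    · exact h'
    · exfalso
      obtain ⟨y, hy⟩ := h x
      exact absurd (hle y) (not_le.2 (h' ▸ hy))
  -- cover by open sets {g < a}, a < M
  have hcover : Set.univ ⊆ ⋃ a : {a : ℝ // a < M}, {x | g x < a.1} := by
    intro x _
    obtain ⟨a, ha1, ha2⟩ := exists_between (hlt x)
    exact Set.mem_iUnion.2 ⟨⟨a, ha2⟩, ha1⟩
  obtain ⟨T, hT⟩ := IsCompact.elim_finite_subcover isCompact_univ
    (fun a : {a : ℝ // a < M} => {x | g x < a.1})
    (fun a => hg.isOpen_preimage a.1) hcover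
  have hTne : T.Nonempty := by
    obtain ⟨x⟩ := (inferInstance : Nonempty X)
    obtain ⟨a, haT, hax⟩ := Set.mem_iUnion₂.1 (hT (Set.mem_univ x))
    exact ⟨a, haT⟩
  set m : ℝ := T.sup' hTne (fun a => a.1) with hm
  have hmM : m < M := by
    rw [hm, Finset.sup'_lt_iff]
    exact fun a _ => a.2
  have : M ≤ m := by
    refine ciSup_le fun x => ?_
    obtain ⟨a, haT, hax⟩ := Set.mem_iUnion₂.1 (hT (Set.mem_univ x))
    exact le_trans (le_of_lt hax) (Finset.le_sup' (fun a : {a : ℝ // a < M} => a.1) haT)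
  exact absurd (lt_of_le_of_lt this hmM) (lt_irrefl M)

lemma part1 [CompactSpace X] (f : X → ℝ) (hf : MemD1 f) :
    (∀ φ : CI X, ∃ x₀ : X, ∀ x, f x * φ.1 x ≤ f x₀ * φ.1 x₀) ∧
    IsDotMeasure (fun φ : CI X => ⨆ x, f x * φ.1 x) := by
  obtain ⟨husc, h01, x1, hx1⟩ := hf
  have : Nonempty X := ⟨x1⟩
  have hb : ∀ (φ : CI X) (x : X), f x * φ.1 x ≤ 1 := fun φ x =>
    mul_le_one₀ (h01 x).2 (φ.2 x).1 (φ.2 x).2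
  have hnn : ∀ (φ : CI X) (x : X), 0 ≤ f x * φ.1 x := fun φ x =>
    mul_nonneg (h01 x).1 (φ.2 x).1
  have hbdd : ∀ φ : CI X, BddAbove (Set.range fun x => f x * φ.1 x) :=
    fun φ => bddAbove_of_le_one (hb φ)
  refine ⟨fun φ => usc_exists_max (usc_mul husc h01 φ) (hb φ), ?_, ?_, ?_, ?_⟩
  · intro φ
    constructor
    · exact le_trans (hnn φ x1) (le_ciSup (hbdd φ) x1)
    · exact ciSup_le (hb φ)
  · -- normalization
    refine le_antisymm (ciSup_le fun x => by
        simpa using hb (CI.one X) x) ?_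
    have : f x1 * (CI.one X).1 x1 = 1 := by simp [CI.one, hx1]
    calc (1:ℝ) = f x1 * (CI.one X).1 x1 := this.symm
      _ ≤ ⨆ x, f x * (CI.one X).1 x := le_ciSup (hbdd _) x1
  · -- homogeneity
    intro l hl φ
    have he : ∀ x, f x * (CI.smul l hl φ).1 x = l * (f x * φ.1 x) := by
      intro x
      simp only [CI.smul, ContinuousMap.mul_apply, ContinuousMap.const_apply]
      ring
    calc (⨆ x, f x * (CI.smul l hl φ).1 x) = ⨆ x, l * (f x * φ.1 x) := by
          exact iSup_congr he
      _ = l * ⨆ x, f x * φ.1 x := (Real.mul_iSup_of_nonneg hl.1 _).symm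
  · -- max
    intro ψ φ
    have he : ∀ x, f x * (CI.max ψ φ).1 x = Max.max (f x * ψ.1 x) (f x * φ.1 x) := by
      intro x
      simp only [CI.max, ContinuousMap.sup_apply]
      exact mul_max_of_nonneg _ _ (h01 x).1
    show (⨆ x, f x * (CI.max ψ φ).1 x) = _
    rw [iSup_congr he]
    refine le_antisymm (ciSup_le fun x => max_le_max (le_ciSup (hbdd ψ) x)
      (le_ciSup (hbdd φ) x)) ?_
    have hbm : BddAbove (Set.range fun x => Max.max (f x * ψ.1 x) (f x * φ.1 x)) :=
      bddAbove_of_le_one fun x => max_le (hb ψ x) (hb φ x)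
    refine max_le (ciSup_le fun x => ?_) (ciSup_le fun x => ?_)
    · exact le_trans (le_max_left _ _) (le_ciSup hbm x)
    · exact le_trans (le_max_right _ _) (le_ciSup hbm x)

end Part1

section Part2
variable {X : Type*} [TopologicalSpace X]

lemma nonempty_of_dot {μ : CI X → ℝ} (hμ : IsDotMeasure μ) : Nonempty X := by
  by_contra h
  have hE : IsEmpty X := not_nonempty_iff.1 h
  have he : CI.smul 0 ⟨le_refl 0, zero_le_one⟩ (CI.one X) = CI.one X :=
    Subtype.ext (ContinuousMap.ext fun x => hE.elim x)
  have h0 := hμ.2.2.1 0 ⟨le_refl 0, zero_le_one⟩ (CI.one X)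
  rw [he, hμ.2.1] at h0
  norm_num at h0

lemma part2 [CompactSpace X] (μ : CI X → ℝ) (hμ : IsDotMeasure μ) : MemD1 (s1Fun μ) := by
  have hne : Nonempty X := nonempty_of_dot hμ
  refine ⟨?_, fun x => ⟨s1_nonneg hμ x, s1_le_one hμ x⟩, ?_⟩
  · -- upper semicontinuity
    intro x a ha
    have h0a : 0 < a := lt_of_le_of_lt (s1_nonneg hμ x) ha
    obtain ⟨ψ, hψx, hψμ⟩ := s1_lt hμ ha
    set t : ℝ := (μ ψ / a + 1) / 2 with htdef
    have hμψ0 : 0 ≤ μ ψ := (hμ.1 ψ).1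
    have ht1 : μ ψ / a < 1 := (div_lt_one h0a).2 hψμ
    have ht : 0 < t ∧ t ≤ 1 := by
      constructor
      · have : 0 ≤ μ ψ / a := div_nonneg hμψ0 h0a.le
        rw [htdef]; linarith
      · rw [htdef]; linarith
    have htgt : μ ψ / a < t := by rw [htdef]; linarith
    have hμχ : μ (CI.trunc t ht ψ) < a := by
      have h1 := hμ.trunc_le t ht ψ
      by_contra hcon
      push_neg at hcon
      have : t * a ≤ t * μ (CI.trunc t ht ψ) := mul_le_mul_of_nonneg_left hcon ht.1.le
      have h2 : t * a ≤ μ ψ := le_trans this h1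
      have : μ ψ / a < μ ψ / a := by
        calc μ ψ / a < t := htgt
          _ ≤ μ ψ / a := (le_div_iff₀ h0a).2 (by linarith [mul_comm t a])
      exact lt_irrefl _ this
    have hopen : IsOpen {y | t < ψ.1 y} := isOpen_lt continuous_const ψ.1.continuous
    have hmem : x ∈ {y | t < ψ.1 y} := by
      simp only [Set.mem_setOf_eq, hψx]
      linarith [ht.2, htgt, ht1]
    filter_upwards [hopen.mem_nhds hmem] with y hy
    calc s1Fun μ y ≤ μ (CI.trunc t ht ψ) :=
          s1_le hμ (CI.trunc_eq_one t ht ψ (le_of_lt hy))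
      _ < a := hμχ
  · -- attains the value 1
    by_contra h
    push_neg at h
    have h' : ∀ x, s1Fun μ x < 1 := fun x => lt_of_le_of_ne (s1_le_one hμ x) (h x)
    -- for each x, choose ψ, t, with μ(trunc) < 1 and trunc = 1 on {ψ > t}
    have key : ∀ x : X, ∃ (χ : CI X) (U : Set X), IsOpen U ∧ x ∈ U ∧ μ χ < 1 ∧
        ∀ y ∈ U, χ.1 y = 1 := by
      intro x
      obtain ⟨ψ, hψx, hψμ⟩ := s1_lt hμ (h' x)
      set t : ℝ := (μ ψ + 1) / 2 with htdef
      have hμψ0 : 0 ≤ μ ψ := (hμ.1 ψ).1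
      have ht : 0 < t ∧ t ≤ 1 := ⟨by rw [htdef]; linarith, by rw [htdef]; linarith⟩
      have htgt : μ ψ < t := by rw [htdef]; linarith
      have htlt : t < 1 := by rw [htdef]; linarith
      have hμχ : μ (CI.trunc t ht ψ) < 1 := by
        have h1 := hμ.trunc_le t ht ψ
        by_contra hcon
        push_neg at hcon
        have : t * 1 ≤ t * μ (CI.trunc t ht ψ) := mul_le_mul_of_nonneg_left hcon ht.1.le
        rw [mul_one] at this
        linarith
      refine ⟨CI.trunc t ht ψ, {y | t < ψ.1 y},
        isOpen_lt continuous_const ψ.1.continuous, by simpa [hψx] using htlt, hμχ, ?_⟩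
      exact fun y hy => CI.trunc_eq_one t ht ψ (le_of_lt hy)
    choose χ U hUopen hUmem hμχ hχU using key
    obtain ⟨T, hT⟩ := IsCompact.elim_finite_subcover isCompact_univ U hUopen
      (fun x _ => Set.mem_iUnion.2 ⟨x, hUmem x⟩)
    have hTne : T.Nonempty := by
      obtain ⟨x⟩ := hne
      obtain ⟨a, haT, _⟩ := Set.mem_iUnion₂.1 (hT (Set.mem_univ x))
      exact ⟨a, haT⟩
    set Θ : CI X := T.sup' hTne χ with hΘ
    have hΘ1 : Θ = CI.one X := by
      refine Subtype.ext (ContinuousMap.ext fun y => ?_)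
      obtain ⟨a, haT, hay⟩ := Set.mem_iUnion₂.1 (hT (Set.mem_univ y))
      have hle1 : Θ.1 y ≤ 1 := (Θ.2 y).2
      have hge : (χ a).1 y ≤ Θ.1 y := by
        have := Finset.le_sup' (f := fun z => (χ z).1 y) haT
        rw [hΘ, Finset.comp_sup'_eq_sup'_comp hTne (fun (c : CI X) => c.1 y)
          (fun c d => ContinuousMap.sup_apply _ _ _)]
        exact this
      have h1 := hχU a y hay
      rw [h1] at hge
      exact le_antisymm hle1 hge
    have hμΘ : μ Θ < 1 := by
      rw [hΘ, Finset.comp_sup'_eq_sup'_comp hTne μ (fun c d => hμ.sup c d)]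
      rw [Finset.sup'_lt_iff]
      exact fun a haT => hμχ a
    rw [hΘ1, hμ.2.1] at hμΘ
    exact lt_irrefl _ hμΘ

end Part2

section Part3
variable {X : Type*} [TopologicalSpace X]

lemma s1_mul_le {μ : CI X → ℝ} (hμ : IsDotMeasure μ) (φ : CI X) (x : X) :
    s1Fun μ x * φ.1 x ≤ μ φ := by
  have hμφ0 : 0 ≤ μ φ := (hμ.1 φ).1
  rcases eq_or_lt_of_le (φ.2 x).1 with hc | hc
  · rw [← hc, mul_zero]; exact hμφ0
  · -- 0 < φ x
    have hkey : ∀ t : ℝ, 0 < t → t < φ.1 x → t * s1Fun μ x ≤ μ φ := by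
      intro t ht0 htc
      have ht : 0 < t ∧ t ≤ 1 := ⟨ht0, le_trans htc.le (φ.2 x).2⟩
      have h1 : s1Fun μ x ≤ μ (CI.trunc t ht φ) :=
        s1_le hμ (CI.trunc_eq_one t ht φ htc.le)
      calc t * s1Fun μ x ≤ t * μ (CI.trunc t ht φ) :=
            mul_le_mul_of_nonneg_left h1 ht0.le
        _ ≤ μ φ := hμ.trunc_le t ht φ
    by_contra hcon
    push_neg at hcon
    have hs0 : 0 < s1Fun μ x := by
      by_contra hs
      push_neg at hs
      have : s1Fun μ x * φ.1 x ≤ 0 := mul_nonpos_of_nonpos_of_nonneg hs (φ.2 x).1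
      linarith
    set t0 : ℝ := μ φ / s1Fun μ x with ht0def
    have ht0c : t0 < φ.1 x := by
      rw [ht0def, div_lt_iff₀ hs0]
      calc μ φ < s1Fun μ x * φ.1 x := hcon
        _ = φ.1 x * s1Fun μ x := mul_comm _ _
    have ht00 : 0 ≤ t0 := div_nonneg hμφ0 hs0.le
    set t : ℝ := (t0 + φ.1 x) / 2 with htdef
    have h1 := hkey t (by rw [htdef]; linarith) (by rw [htdef]; linarith)
    have h2 : t0 < t := by rw [htdef]; linarith
    have : μ φ < t * s1Fun μ x := by
      calc μ φ = t0 * s1Fun μ x := by rw [ht0def]; field_simp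
        _ < t * s1Fun μ x := mul_lt_mul_of_pos_right h2 hs0
    linarith

lemma part3 [CompactSpace X] (μ : CI X → ℝ) (hμ : IsDotMeasure μ) (φ : CI X) :
    (⨆ x, s1Fun μ x * φ.1 x) = μ φ := by
  have hne : Nonempty X := nonempty_of_dot hμ
  have hb : ∀ x, s1Fun μ x * φ.1 x ≤ 1 := fun x =>
    mul_le_one₀ (s1_le_one hμ x) (φ.2 x).1 (φ.2 x).2
  have hbdd : BddAbove (Set.range fun x => s1Fun μ x * φ.1 x) := bddAbove_of_le_one hb
  refine le_antisymm (ciSup_le fun x => s1_mul_le hμ φ x) ?_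
  set S : ℝ := ⨆ x, s1Fun μ x * φ.1 x with hS
  have hS0 : 0 ≤ S := by
    obtain ⟨x⟩ := hne
    exact le_trans (mul_nonneg (s1_nonneg hμ x) (φ.2 x).1) (le_ciSup hbdd x)
  refine le_of_forall_pos_le_add fun ε hε => ?_
  set a : ℝ := S + ε/2 with hadef
  have ha0 : 0 < a := by rw [hadef]; linarith
  have hSe : 0 < S + ε := by linarith
  set t : ℝ := a / (S + ε) with htdef
  have htlt : t < 1 := by
    rw [htdef, div_lt_one hSe, hadef]; linarith
  have ht : 0 < t ∧ t ≤ 1 := ⟨div_pos ha0 hSe, htlt.le⟩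
  have hta : t * (S + ε) = a := by
    rw [htdef]; field_simp
  have key : ∀ x : X, ∃ (η : CI X) (U : Set X), IsOpen U ∧ x ∈ U ∧
      (∀ y ∈ U, φ.1 y ≤ η.1 y) ∧ μ η ≤ S + ε := by
    intro x
    have step1 : ∃ ψ : CI X, ψ.1 x = 1 ∧ φ.1 x * μ ψ < a := by
      by_cases hca : φ.1 x < a
      · exact ⟨CI.one X, rfl, by rw [hμ.2.1, mul_one]; exact hca⟩
      · push_neg at hca
        have hc0 : 0 < φ.1 x := lt_of_lt_of_le ha0 hca
        have hsx : s1Fun μ x < a / φ.1 x := by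
          rw [lt_div_iff₀ hc0]
          calc s1Fun μ x * φ.1 x ≤ S := le_ciSup hbdd x
            _ < a := by rw [hadef]; linarith
        obtain ⟨ψ, hψx, hψμ⟩ := s1_lt hμ hsx
        refine ⟨ψ, hψx, ?_⟩
        rw [mul_comm, ← lt_div_iff₀ hc0]
        exact hψμ
    obtain ⟨ψ, hψx, hcψ⟩ := step1
    have hμψ0 : 0 ≤ μ ψ := (hμ.1 ψ).1
    have htrunc := hμ.trunc_le t ht ψ
    by_cases hbig : μ ψ ≤ a
    · -- take η = trunc t ψ
      refine ⟨CI.trunc t ht ψ, {y | t < ψ.1 y},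
        isOpen_lt continuous_const ψ.1.continuous, ?_, ?_, ?_⟩
      · simp only [Set.mem_setOf_eq, hψx]; exact htlt
      · intro y hy
        rw [CI.trunc_eq_one t ht ψ (le_of_lt hy)]
        exact (φ.2 y).2
      · have h2 : t * μ (CI.trunc t ht ψ) ≤ t * (S + ε) := by
          rw [hta]; exact le_trans htrunc hbig
        exact le_of_mul_le_mul_left h2 ht.1
    · push_neg at hbig
      have hμψpos : 0 < μ ψ := lt_trans ha0 hbig
      set b : ℝ := a / μ ψ with hbdef
      have hb0 : 0 < b := div_pos ha0 hμψpos
      have hb1 : b < 1 := by rw [hbdef, div_lt_one hμψpos]; exact hbig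
      have hcb : φ.1 x < b := by
        rw [hbdef, lt_div_iff₀ hμψpos]; exact hcψ
      set η : CI X := CI.smul b ⟨hb0.le, hb1.le⟩ (CI.trunc t ht ψ) with hηdef
      have hηapp : ∀ y, η.1 y = b * (CI.trunc t ht ψ).1 y := fun y => by
        simp [hηdef, CI.smul]
      refine ⟨η, {y | t < ψ.1 y} ∩ {y | φ.1 y < b},
        (isOpen_lt continuous_const ψ.1.continuous).inter
          (isOpen_lt φ.1.continuous continuous_const), ?_, ?_, ?_⟩
      · exact ⟨by simp only [Set.mem_setOf_eq, hψx]; exact htlt, hcb⟩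
      · rintro y ⟨hy1, hy2⟩
        rw [hηapp y, CI.trunc_eq_one t ht ψ (le_of_lt hy1), mul_one]
        exact hy2.le
      · have hμη : μ η = b * μ (CI.trunc t ht ψ) := hμ.2.2.1 b ⟨hb0.le, hb1.le⟩ _
        have h2 : t * μ η ≤ t * (S + ε) := by
          rw [hta, hμη]
          calc t * (b * μ (CI.trunc t ht ψ)) = b * (t * μ (CI.trunc t ht ψ)) := by ring
            _ ≤ b * μ ψ := mul_le_mul_of_nonneg_left htrunc hb0.le
            _ = a := by rw [hbdef]; field_simp
        exact le_of_mul_le_mul_left h2 ht.1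
  choose η U hUopen hUmem hφη hμη using key
  obtain ⟨T, hT⟩ := IsCompact.elim_finite_subcover isCompact_univ U hUopen
    (fun x _ => Set.mem_iUnion.2 ⟨x, hUmem x⟩)
  have hTne : T.Nonempty := by
    obtain ⟨x⟩ := hne
    obtain ⟨z, hzT, _⟩ := Set.mem_iUnion₂.1 (hT (Set.mem_univ x))
    exact ⟨z, hzT⟩
  set Θ : CI X := T.sup' hTne η with hΘ
  have hmono : ∀ y, φ.1 y ≤ Θ.1 y := by
    intro y
    obtain ⟨z, hzT, hzy⟩ := Set.mem_iUnion₂.1 (hT (Set.mem_univ y))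
    have hge : (η z).1 y ≤ Θ.1 y := by
      have := Finset.le_sup' (f := fun w => (η w).1 y) hzT
      rw [hΘ, Finset.comp_sup'_eq_sup'_comp hTne (fun (c : CI X) => c.1 y)
        (fun c d => ContinuousMap.sup_apply _ _ _)]
      exact this
    exact le_trans (hφη z y hzy) hge
  have hμΘ : μ Θ ≤ S + ε := by
    rw [hΘ, Finset.comp_sup'_eq_sup'_comp hTne μ (fun c d => hμ.sup c d)]
    exact Finset.sup'_le hTne _ fun z _ => hμη z
  exact le_trans (hμ.mono hmono) hμΘ

end Part3

section Part4
variable {X : Type*} [TopologicalSpace X]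

lemma part4 [CompactSpace X] [T2Space X] (f : X → ℝ) (hf : MemD1 f) (x : X) :
    s1Fun (fun φ : CI X => ⨆ y, f y * φ.1 y) x = f x := by
  obtain ⟨husc, h01, x1, hx1⟩ := hf
  have hne : Nonempty X := ⟨x1⟩
  have hb : ∀ (φ : CI X) (y : X), f y * φ.1 y ≤ 1 := fun φ y =>
    mul_le_one₀ (h01 y).2 (φ.2 y).1 (φ.2 y).2
  have hbdd : ∀ φ : CI X, BddAbove (Set.range fun y => f y * φ.1 y) :=
    fun φ => bddAbove_of_le_one (hb φ)
  set ν : CI X → ℝ := fun φ : CI X => ⨆ y, f y * φ.1 y with hν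
  have hνdot : IsDotMeasure ν := (part1 f ⟨husc, h01, x1, hx1⟩).2
  refine le_antisymm ?_ ?_
  · -- s1Fun ν x ≤ f x, via Urysohn functions
    by_contra hcon
    push_neg at hcon
    set a : ℝ := (f x + s1Fun ν x) / 2 with hadef
    have hfa : f x < a := by rw [hadef]; linarith
    have has : a < s1Fun ν x := by rw [hadef]; linarith
    have ha0 : 0 < a := lt_of_le_of_lt (h01 x).1 hfa
    -- the set {f < a} is open and contains x
    have hopen : IsOpen {y | f y < a} := husc.isOpen_preimage a
    have hclosed : IsClosed {y | f y < a}ᶜ := hopen.isClosed_compl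
    obtain ⟨g, hg0, hg1, hg01⟩ := exists_continuous_zero_one_of_isClosed hclosed
      (isClosed_singleton (x := x))
      (by
        rw [Set.disjoint_singleton_right]
        simp only [Set.mem_compl_iff, Set.mem_setOf_eq, not_not]
        exact hfa)
    set φ : CI X := ⟨g, fun y => ⟨(hg01 y).1, (hg01 y).2⟩⟩ with hφdef
    have hφx : φ.1 x = 1 := hg1 rfl
    have hνφ : ν φ ≤ a := by
      refine ciSup_le fun y => ?_
      by_cases hy : f y < a
      · calc f y * φ.1 y ≤ f y * 1 := mul_le_mul_of_nonneg_left (φ.2 y).2 (h01 y).1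
          _ = f y := mul_one _
          _ ≤ a := hy.le
      · have : φ.1 y = 0 := hg0 hy
        rw [this, mul_zero]
        exact ha0.le
    have := s1_le hνdot hφx
    linarith
  · -- f x ≤ s1Fun ν x
    refine le_ciInf fun ⟨φ, hφx⟩ => ?_
    calc f x = f x * φ.1 x := by rw [hφx, mul_one]
      _ ≤ ν φ := le_ciSup (hbdd φ) x
end Part4

/-- For a compactum `X`, the maps
`n₁X(f)(φ) = max{f(x)·φ(x) : x ∈ X}` and
`s₁X(μ)(x) = inf{μ(φ) : φ ∈ C(X,[0,1]), φ(x) = 1}` are well defined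
(`n₁X(f)` is a `·`-measure for `f ∈ D₁X`, the maximum being attained, and
`s₁X(μ) ∈ D₁X` for every `·`-measure `μ`) and mutually inverse. -/
theorem stmt4 {X : Type*} [TopologicalSpace X] [CompactSpace X] [T2Space X] :
    (∀ f : X → ℝ, MemD1 f →
        (∀ φ : CI X, ∃ x₀ : X, ∀ x, f x * φ.1 x ≤ f x₀ * φ.1 x₀) ∧
        IsDotMeasure (fun φ : CI X => ⨆ x, f x * φ.1 x)) ∧
    (∀ μ : CI X → ℝ, IsDotMeasure μ → MemD1 (s1Fun μ)) ∧
    (∀ μ : CI X → ℝ, IsDotMeasure μ →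
        ∀ φ : CI X, (⨆ x, s1Fun μ x * φ.1 x) = μ φ) ∧
    (∀ f : X → ℝ, MemD1 f →
        ∀ x : X, s1Fun (fun φ : CI X => ⨆ y, f y * φ.1 y) x = f x) :=
  ⟨fun f hf => part1 f hf, fun μ hμ => part2 μ hμ,
   fun μ hμ φ => part3 μ hμ φ, fun f hf x => part4 f hf x⟩
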